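/- arXiv:2303.13942 — 3 statements merged into one kernel-verified Lean document; each statement's English description precedes it below -/
import Mathlib

section
/- Let q, p be real constants, L > 0, ξ ∈ ℤ, let (P_n)_{n∈ℤ} be an absolutely summable family of complex numbers, and suppose that for each k ∈ ℤ the function r_{k,ξ−k} : [0,∞) → ℂ is continuous, that Σ_k |r_{k,ξ−k}(0)| < ∞, that Σ_k sup_{τ∈[0,T]} |r_{k,ξ−k}(τ)| < ∞ for each T > 0, and that for all t ≥ 0 and all k: r_{k,ξ−k}(t) = exp(−i p 2π² ξ(2k−ξ) t / L²)·r_{k,ξ−k}(0) + ∫_0^t exp(−i p 2π² ξ(2k−ξ)(t−τ)/L²)·iq(P_{k−ξ} − P_k)·Σ_{K∈ℤ} r_{K,ξ−K}(τ) dτ. Then f(ξ,t) := Σ_{K∈ℤ} r_{K,ξ−K}(t) satisfies the scalar Volterra equation f(ξ,t) = φ_L(ξ,t) + ∫_0^t h_L(ξ, t−τ) f(ξ,τ) dτ, where φ_L(ξ,t) = Σ_k exp(−i p 2π² ξ(2k−ξ) t / L²) r_{k,ξ−k}(0) and h_L(ξ,s) = Σ_k exp(−i p 2π² ξ(2k−ξ)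 s / L²) iq(P_{k−ξ} − P_k). -/
open MeasureTheory Set

private lemma exp_norm_one (p L : ℝ) (ξ k : ℤ) (s : ℝ) :
    ‖Complex.exp (-Complex.I * (p : ℂ) * (2 * (Real.pi : ℂ) ^ 2) * (ξ : ℂ)
        * (2 * (k : ℂ) - ξ) * (s : ℂ) / (L : ℂ) ^ 2)‖ = 1 := by
  have h : -Complex.I * (p : ℂ) * (2 * (Real.pi : ℂ) ^ 2) * (ξ : ℂ)
        * (2 * (k : ℂ) - ξ) * (s : ℂ) / (L : ℂ) ^ 2
      = ((-(p * (2 * Real.pi ^ 2) * (ξ : ℝ) * (2 * (k : ℝ) - ξ) * s / L ^ 2) : ℝ) : ℂ)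
          * Complex.I := by
    push_cast
    ring
  rw [h]
  exact Complex.norm_exp_ofReal_mul_I _

private lemma exp_norm_one' (p L : ℝ) (ξ k : ℤ) (t τ : ℝ) :
    ‖Complex.exp (-Complex.I * (p : ℂ) * (2 * (Real.pi : ℂ) ^ 2) * (ξ : ℂ)
        * (2 * (k : ℂ) - ξ) * ((t : ℂ) - (τ : ℂ)) / (L : ℂ) ^ 2)‖ = 1 := by
  rw [← Complex.ofReal_sub]
  exact exp_norm_one p L ξ k (t - τ)

/-- If the Fourier coefficients `r_{k,ξ−k}` satisfy the mild-form linearized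
periodized Alber equations (with suitable continuity and summability), then
`f(ξ,t) = Σ_K r_{K,ξ−K}(t)` satisfies the scalar Volterra equation
`f(ξ,t) = φ_L(ξ,t) + ∫_0^t h_L(ξ,t−τ) f(ξ,τ) dτ`. -/
theorem volterra_equation_for_f (q p L : ℝ) (hL : 0 < L) (ξ : ℤ) (P : ℤ → ℂ)
    (hP : Summable fun n => ‖P n‖)
    (r : ℤ → ℝ → ℂ)
    (hcont : ∀ k, ContinuousOn (r k) (Set.Ici (0 : ℝ)))
    (hsum0 : Summable fun k : ℤ => ‖r k 0‖)
    (hsumT : ∀ T : ℝ, 0 < T → Summable fun k : ℤ => ⨆ τ : Set.Icc (0 : ℝ) T, ‖r k (τ : ℝ)‖)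
    (hmild : ∀ k : ℤ, ∀ t : ℝ, 0 ≤ t →
      r k t = Complex.exp (-Complex.I * p * (2 * Real.pi ^ 2) * (ξ : ℂ)
              * (2 * (k : ℂ) - ξ) * t / (L : ℂ) ^ 2) * r k 0
        + ∫ τ in (0 : ℝ)..t,
            Complex.exp (-Complex.I * p * (2 * Real.pi ^ 2) * (ξ : ℂ)
                * (2 * (k : ℂ) - ξ) * ((t : ℂ) - τ) / (L : ℂ) ^ 2) *
              (Complex.I * q * (P (k - ξ) - P k)) * ∑' K : ℤ, r K τ) :
    ∀ t : ℝ, 0 ≤ t →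
      (∑' K : ℤ, r K t)
        = (∑' k : ℤ, Complex.exp (-Complex.I * p * (2 * Real.pi ^ 2) * (ξ : ℂ)
              * (2 * (k : ℂ) - ξ) * t / (L : ℂ) ^ 2) * r k 0)
          + ∫ τ in (0 : ℝ)..t,
              (∑' k : ℤ, Complex.exp (-Complex.I * p * (2 * Real.pi ^ 2) * (ξ : ℂ)
                  * (2 * (k : ℂ) - ξ) * ((t : ℂ) - τ) / (L : ℂ) ^ 2) *
                (Complex.I * q * (P (k - ξ) - P k))) * ∑' K : ℤ, r K τ := by
  intro t ht
  rcases ht.lt_or_eq with htpos | h0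
  · -- main case : 0 < t
    -- notation
    set u : ℤ → ℝ := fun k => ⨆ τ : Set.Icc (0 : ℝ) t, ‖r k (τ : ℝ)‖ with hu_def
    have hu : Summable u := hsumT t htpos
    have hbdd : ∀ k : ℤ, BddAbove (Set.range fun τ : Set.Icc (0 : ℝ) t => ‖r k (τ : ℝ)‖) := by
      intro k
      obtain ⟨C, hC⟩ := isCompact_Icc.exists_bound_of_continuousOn
        ((hcont k).mono (Set.Icc_subset_Ici_self : Set.Icc (0:ℝ) t ⊆ Set.Ici 0))
      refine ⟨C, ?_⟩
      rintro x ⟨τ, rfl⟩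
      exact hC τ τ.2
    have hle : ∀ k : ℤ, ∀ τ ∈ Set.Icc (0 : ℝ) t, ‖r k τ‖ ≤ u k := by
      intro k τ hτ
      exact le_ciSup (hbdd k) (⟨τ, hτ⟩ : Set.Icc (0 : ℝ) t)
    have hu0 : ∀ k, 0 ≤ u k := fun k =>
      le_trans (norm_nonneg _) (hle k 0 ⟨le_refl 0, ht⟩)
    have hrsum : ∀ τ ∈ Set.Icc (0 : ℝ) t, Summable fun K : ℤ => ‖r K τ‖ := by
      intro τ hτ
      exact Summable.of_nonneg_of_le (fun _ => norm_nonneg _) (fun k => hle k τ hτ) hu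
    set C0 : ℝ := ∑' k : ℤ, u k with hC0_def
    have hC0 : 0 ≤ C0 := tsum_nonneg hu0
    have hfC : ∀ τ ∈ Set.Icc (0 : ℝ) t, ‖∑' K : ℤ, r K τ‖ ≤ C0 := by
      intro τ hτ
      calc ‖∑' K : ℤ, r K τ‖ ≤ ∑' K : ℤ, ‖r K τ‖ := norm_tsum_le_tsum_norm (hrsum τ hτ)
        _ ≤ ∑' k : ℤ, u k := Summable.tsum_le_tsum (fun k => hle k τ hτ) (hrsum τ hτ) hu
    have hfcont : ContinuousOn (fun τ => ∑' K : ℤ, r K τ) (Set.Icc (0 : ℝ) t) :=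
      continuousOn_tsum
        (fun k => (hcont k).mono (Set.Icc_subset_Ici_self : Set.Icc (0:ℝ) t ⊆ Set.Ici 0))
        hu (fun k τ hτ => hle k τ hτ)
    -- the constant factor and its bound
    set M : ℤ → ℝ := fun k => |q| * (‖P (k - ξ)‖ + ‖P k‖) with hM_def
    have hM0 : ∀ k, 0 ≤ M k := fun k =>
      mul_nonneg (abs_nonneg q) (add_nonneg (norm_nonneg _) (norm_nonneg _))
    have hMsum : Summable M := by
      have h1 : Summable fun k : ℤ => ‖P (k - ξ)‖ :=
        hP.comp_injective (sub_left_injective (b := ξ))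
      exact (h1.add hP).mul_left |q|
    have hcnorm : ∀ k : ℤ, ‖Complex.I * (q : ℂ) * (P (k - ξ) - P k)‖ ≤ M k := by
      intro k
      have h1 : ‖Complex.I * (q : ℂ) * (P (k - ξ) - P k)‖ = |q| * ‖P (k - ξ) - P k‖ := by
        simp [norm_mul]
      rw [h1, hM_def]
      exact mul_le_mul_of_nonneg_left (norm_sub_le _ _) (abs_nonneg q)
    -- summability of the two families
    have hA : Summable fun k : ℤ => Complex.exp (-Complex.I * p * (2 * Real.pi ^ 2) * (ξ : ℂ)
        * (2 * (k : ℂ) - ξ) * t / (L : ℂ) ^ 2) * r k 0 := by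
      refine Summable.of_norm ?_
      have : (fun k : ℤ => ‖Complex.exp (-Complex.I * p * (2 * Real.pi ^ 2) * (ξ : ℂ)
          * (2 * (k : ℂ) - ξ) * t / (L : ℂ) ^ 2) * r k 0‖) = fun k : ℤ => ‖r k 0‖ := by
        funext k
        rw [norm_mul, exp_norm_one p L ξ k t, one_mul]
      rw [this]
      exact hsum0
    -- bound on each integrand
    have hgbound : ∀ k : ℤ, ∀ τ ∈ Set.Ioc (0 : ℝ) t,
        ‖Complex.exp (-Complex.I * p * (2 * Real.pi ^ 2) * (ξ : ℂ)
            * (2 * (k : ℂ) - ξ) * ((t : ℂ) - τ) / (L : ℂ) ^ 2) *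
          (Complex.I * q * (P (k - ξ) - P k)) * ∑' K : ℤ, r K τ‖ ≤ M k * C0 := by
      intro k τ hτ
      rw [norm_mul, norm_mul, exp_norm_one' p L ξ k t τ, one_mul]
      exact mul_le_mul (hcnorm k) (hfC τ ⟨le_of_lt hτ.1, hτ.2⟩) (norm_nonneg _) (hM0 k)
    have hB : Summable fun k : ℤ => ∫ τ in (0 : ℝ)..t,
        Complex.exp (-Complex.I * p * (2 * Real.pi ^ 2) * (ξ : ℂ)
            * (2 * (k : ℂ) - ξ) * ((t : ℂ) - τ) / (L : ℂ) ^ 2) *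
          (Complex.I * q * (P (k - ξ) - P k)) * ∑' K : ℤ, r K τ := by
      refine Summable.of_norm ?_
      refine Summable.of_nonneg_of_le (fun _ => norm_nonneg _)
        (f := fun k => M k * C0 * t) (fun k => ?_) ?_
      · have := intervalIntegral.norm_integral_le_of_norm_le_const (a := 0) (b := t)
          (C := M k * C0) (f := fun τ => Complex.exp (-Complex.I * p * (2 * Real.pi ^ 2) * (ξ : ℂ)
            * (2 * (k : ℂ) - ξ) * ((t : ℂ) - τ) / (L : ℂ) ^ 2) *
          (Complex.I * q * (P (k - ξ) - P k)) * ∑' K : ℤ, r K τ) ?_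
        · calc _ ≤ M k * C0 * |t - 0| := this
            _ = M k * C0 * t := by rw [sub_zero, abs_of_pos htpos]
        · intro x hx
          rw [Set.uIoc_of_le ht] at hx
          exact hgbound k x hx
      · have : (fun k => M k * C0 * t) = fun k => M k * (C0 * t) := by
          funext k; ring
        rw [this]
        exact hMsum.mul_right (C0 * t)
    -- measurability of integrands
    have hmeas : ∀ k : ℤ, AEStronglyMeasurable (fun τ : ℝ =>
        Complex.exp (-Complex.I * p * (2 * Real.pi ^ 2) * (ξ : ℂ)
            * (2 * (k : ℂ) - ξ) * ((t : ℂ) - τ) / (L : ℂ) ^ 2) *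
          (Complex.I * q * (P (k - ξ) - P k)) * ∑' K : ℤ, r K τ)
        (volume.restrict (Set.Ioc (0 : ℝ) t)) := by
      intro k
      have hexp : Continuous fun τ : ℝ => Complex.exp (-Complex.I * p * (2 * Real.pi ^ 2) * (ξ : ℂ)
          * (2 * (k : ℂ) - ξ) * ((t : ℂ) - τ) / (L : ℂ) ^ 2) := by
        apply Continuous.cexp
        exact (continuous_const.mul (continuous_const.sub Complex.continuous_ofReal)).div_const _
      have hf : AEStronglyMeasurable (fun τ : ℝ => ∑' K : ℤ, r K τ)
          (volume.restrict (Set.Ioc (0 : ℝ) t)) :=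
        (hfcont.mono Set.Ioc_subset_Icc_self).aestronglyMeasurable measurableSet_Ioc
      exact ((hexp.aestronglyMeasurable.mul aestronglyMeasurable_const).mul hf)
    -- finiteness of the sum of lintegrals
    have hlint : (∑' k : ℤ, ∫⁻ τ in Set.Ioc (0 : ℝ) t,
        ‖Complex.exp (-Complex.I * p * (2 * Real.pi ^ 2) * (ξ : ℂ)
            * (2 * (k : ℂ) - ξ) * ((t : ℂ) - τ) / (L : ℂ) ^ 2) *
          (Complex.I * q * (P (k - ξ) - P k)) * ∑' K : ℤ, r K τ‖₊) ≠ ⊤ := by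
      have hb : ∀ k : ℤ, (∫⁻ τ in Set.Ioc (0 : ℝ) t,
          ‖Complex.exp (-Complex.I * p * (2 * Real.pi ^ 2) * (ξ : ℂ)
              * (2 * (k : ℂ) - ξ) * ((t : ℂ) - τ) / (L : ℂ) ^ 2) *
            (Complex.I * q * (P (k - ξ) - P k)) * ∑' K : ℤ, r K τ‖₊)
          ≤ ENNReal.ofReal (M k * C0 * t) := by
        intro k
        have h1 : (∫⁻ τ in Set.Ioc (0 : ℝ) t,
            ‖Complex.exp (-Complex.I * p * (2 * Real.pi ^ 2) * (ξ : ℂ)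
                * (2 * (k : ℂ) - ξ) * ((t : ℂ) - τ) / (L : ℂ) ^ 2) *
              (Complex.I * q * (P (k - ξ) - P k)) * ∑' K : ℤ, r K τ‖₊)
            ≤ ∫⁻ _ in Set.Ioc (0 : ℝ) t, ENNReal.ofReal (M k * C0) := by
          refine setLIntegral_mono measurable_const ?_
          intro x hx
          have := hgbound k x hx
          rw [← ENNReal.ofReal_coe_nnreal, coe_nnnorm]
          exact ENNReal.ofReal_le_ofReal this
        calc _ ≤ ∫⁻ _ in Set.Ioc (0 : ℝ) t, ENNReal.ofReal (M k * C0) := h1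
          _ = ENNReal.ofReal (M k * C0) * volume (Set.Ioc (0 : ℝ) t) :=
            setLIntegral_const _ _
          _ = ENNReal.ofReal (M k * C0) * ENNReal.ofReal t := by
            rw [Real.volume_Ioc, sub_zero]
          _ = ENNReal.ofReal (M k * C0 * t) :=
            (ENNReal.ofReal_mul (mul_nonneg (hM0 k) hC0)).symm
      have hMsum' : Summable fun k : ℤ => M k * C0 * t := by
        have : (fun k : ℤ => M k * C0 * t) = fun k => M k * (C0 * t) := by
          funext k; ring
        rw [this]
        exact hMsum.mul_right (C0 * t)
      refine ne_top_of_le_ne_top ?_ (ENNReal.tsum_le_tsum hb)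
      rw [← ENNReal.ofReal_tsum_of_nonneg
        (fun k => mul_nonneg (mul_nonneg (hM0 k) hC0) (le_of_lt htpos)) hMsum']
      exact ENNReal.ofReal_ne_top
    -- put everything together
    calc (∑' K : ℤ, r K t)
        = ∑' k : ℤ, (Complex.exp (-Complex.I * p * (2 * Real.pi ^ 2) * (ξ : ℂ)
              * (2 * (k : ℂ) - ξ) * t / (L : ℂ) ^ 2) * r k 0
          + ∫ τ in (0 : ℝ)..t,
              Complex.exp (-Complex.I * p * (2 * Real.pi ^ 2) * (ξ : ℂ)
                  * (2 * (k : ℂ) - ξ) * ((t : ℂ) - τ) / (L : ℂ) ^ 2) *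
                (Complex.I * q * (P (k - ξ) - P k)) * ∑' K : ℤ, r K τ) :=
        tsum_congr fun k => hmild k t ht
      _ = (∑' k : ℤ, Complex.exp (-Complex.I * p * (2 * Real.pi ^ 2) * (ξ : ℂ)
              * (2 * (k : ℂ) - ξ) * t / (L : ℂ) ^ 2) * r k 0)
          + ∑' k : ℤ, ∫ τ in (0 : ℝ)..t,
              Complex.exp (-Complex.I * p * (2 * Real.pi ^ 2) * (ξ : ℂ)
                  * (2 * (k : ℂ) - ξ) * ((t : ℂ) - τ) / (L : ℂ) ^ 2) *
                (Complex.I * q * (P (k - ξ) - P k)) * ∑' K : ℤ, r K τ :=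
        Summable.tsum_add hA hB
      _ = (∑' k : ℤ, Complex.exp (-Complex.I * p * (2 * Real.pi ^ 2) * (ξ : ℂ)
              * (2 * (k : ℂ) - ξ) * t / (L : ℂ) ^ 2) * r k 0)
          + ∫ τ in (0 : ℝ)..t,
              (∑' k : ℤ, Complex.exp (-Complex.I * p * (2 * Real.pi ^ 2) * (ξ : ℂ)
                  * (2 * (k : ℂ) - ξ) * ((t : ℂ) - τ) / (L : ℂ) ^ 2) *
                (Complex.I * q * (P (k - ξ) - P k))) * ∑' K : ℤ, r K τ := by
        congr 1
        calc (∑' k : ℤ, ∫ τ in (0 : ℝ)..t,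
              Complex.exp (-Complex.I * p * (2 * Real.pi ^ 2) * (ξ : ℂ)
                  * (2 * (k : ℂ) - ξ) * ((t : ℂ) - τ) / (L : ℂ) ^ 2) *
                (Complex.I * q * (P (k - ξ) - P k)) * ∑' K : ℤ, r K τ)
            = ∑' k : ℤ, ∫ τ in Set.Ioc (0 : ℝ) t,
              Complex.exp (-Complex.I * p * (2 * Real.pi ^ 2) * (ξ : ℂ)
                  * (2 * (k : ℂ) - ξ) * ((t : ℂ) - τ) / (L : ℂ) ^ 2) *
                (Complex.I * q * (P (k - ξ) - P k)) * ∑' K : ℤ, r K τ :=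
            tsum_congr fun k => intervalIntegral.integral_of_le ht
          _ = ∫ τ in Set.Ioc (0 : ℝ) t, ∑' k : ℤ,
              Complex.exp (-Complex.I * p * (2 * Real.pi ^ 2) * (ξ : ℂ)
                  * (2 * (k : ℂ) - ξ) * ((t : ℂ) - τ) / (L : ℂ) ^ 2) *
                (Complex.I * q * (P (k - ξ) - P k)) * ∑' K : ℤ, r K τ :=
            (integral_tsum hmeas hlint).symm
          _ = ∫ τ in Set.Ioc (0 : ℝ) t,
              (∑' k : ℤ, Complex.exp (-Complex.I * p * (2 * Real.pi ^ 2) * (ξ : ℂ)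
                  * (2 * (k : ℂ) - ξ) * ((t : ℂ) - τ) / (L : ℂ) ^ 2) *
                (Complex.I * q * (P (k - ξ) - P k))) * ∑' K : ℤ, r K τ := by
            simp only [tsum_mul_right]
          _ = ∫ τ in (0 : ℝ)..t,
              (∑' k : ℤ, Complex.exp (-Complex.I * p * (2 * Real.pi ^ 2) * (ξ : ℂ)
                  * (2 * (k : ℂ) - ξ) * ((t : ℂ) - τ) / (L : ℂ) ^ 2) *
                (Complex.I * q * (P (k - ξ) - P k))) * ∑' K : ℤ, r K τ :=
            (intervalIntegral.integral_of_le ht).symm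
  · -- t = 0
    subst h0
    simp
end

section
/- Let p, q be real constants, let S : ℝ → ℝ be continuously differentiable with compact support, let X ∈ ℝ, and let ω ∈ ℂ with Re(ω) > 0. Let (L_m) be a sequence of positive reals with L_m → ∞ and (ξ_m) a sequence of integers with ξ_m / L_m → X. Then h̃_{L_m}(ξ_m, ω) := (iq/L_m) Σ_{k∈ℤ} (S((k−ξ_m)/L_m) − S(k/L_m)) / (ω + i p 2π² ξ_m (2k−ξ_m)/L_m²) converges, as m → ∞, to iq ∫_{−∞}^{∞} (S(k − X/2) − S(k + X/2)) / (ω + 4π² i p k X) dk. -/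
open MeasureTheory Filter

noncomputable def Phi (S : ℝ → ℝ) (p : ℝ) (ω : ℂ) (u v : ℝ) : ℂ :=
  ((S (v - u) - S v : ℝ) : ℂ) /
    (ω + Complex.I * (p : ℂ) * (2 * (Real.pi : ℂ) ^ 2) * (u : ℂ) * (2 * (v : ℂ) - (u : ℂ)))

lemma denom_eq (p u v : ℝ) (ω : ℂ) :
    ω + Complex.I * (p : ℂ) * (2 * (Real.pi : ℂ) ^ 2) * (u : ℂ) * (2 * (v : ℂ) - (u : ℂ))
      = ω + ((p * (2 * Real.pi ^ 2) * u * (2 * v - u) : ℝ) : ℂ) * Complex.I := by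
  push_cast; ring

lemma denom_re (ω : ℂ) (r : ℝ) : (ω + (r : ℂ) * Complex.I).re = ω.re := by
  simp

lemma denom_ne (ω : ℂ) (hω : 0 < ω.re) (r : ℝ) : ω + (r : ℂ) * Complex.I ≠ 0 := by
  intro h
  have h2 : (ω + (r : ℂ) * Complex.I).re = 0 := by rw [h]; simp
  rw [denom_re] at h2; linarith

lemma denom_abs (ω : ℂ) (r : ℝ) : ω.re ≤ ‖ω + (r : ℂ) * Complex.I‖ := calc
  ω.re = (ω + (r : ℂ) * Complex.I).re := (denom_re ω r).symm
  _ ≤ |(ω + (r : ℂ) * Complex.I).re| := le_abs_self _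
  _ ≤ ‖ω + (r : ℂ) * Complex.I‖ := Complex.abs_re_le_norm _

lemma Phi_bound (S : ℝ → ℝ) (p : ℝ) (ω : ℂ) (hω : 0 < ω.re) (M : ℝ)
    (hM : ∀ y, |S y| ≤ M) (u v : ℝ) : ‖Phi S p ω u v‖ ≤ 2 * M / ω.re := by
  rw [Phi, denom_eq, norm_div]
  have h1 : ‖((S (v - u) - S v : ℝ) : ℂ)‖ ≤ 2 * M := by
    rw [Complex.norm_real]
    calc ‖S (v - u) - S v‖ ≤ |S (v - u)| + |S v| := norm_sub_le _ _
    _ ≤ M + M := add_le_add (hM _) (hM _)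
    _ = 2 * M := by ring
  exact div_le_div₀ (by linarith [abs_nonneg (S 0), hM 0]) h1 hω (denom_abs ω _)

lemma Phi_zero (S : ℝ → ℝ) (p : ℝ) (ω : ℂ) (u v : ℝ)
    (h1 : S (v - u) = 0) (h2 : S v = 0) : Phi S p ω u v = 0 := by
  rw [Phi, h1, h2]; simp

lemma Phi_cont (S : ℝ → ℝ) (hS : Continuous S) (p : ℝ) (ω : ℂ) (hω : 0 < ω.re) :
    Continuous (fun z : ℝ × ℝ => Phi S p ω z.1 z.2) := by
  unfold Phi
  apply Continuous.div
  · exact Complex.continuous_ofReal.comp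
      ((hS.comp (continuous_snd.sub continuous_fst)).sub (hS.comp continuous_snd))
  · fun_prop
  · intro z
    rw [denom_eq]
    exact denom_ne ω hω _

lemma f_eq_Phi (S : ℝ → ℝ) (p : ℝ) (ω : ℂ) (L : ℝ) (hL : L ≠ 0) (ξm k : ℤ) :
    ((S (((k : ℝ) - (ξm : ℝ)) / L) - S ((k : ℝ) / L) : ℝ) : ℂ) /
      (ω + Complex.I * p * (2 * Real.pi ^ 2) * ((ξm : ℤ) : ℂ)
        * (2 * (k : ℂ) - ((ξm : ℤ) : ℂ)) / (L : ℂ) ^ 2)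
    = Phi S p ω ((ξm : ℝ) / L) ((k : ℝ) / L) := by
  have hLC : (L : ℂ) ≠ 0 := by exact_mod_cast hL
  rw [Phi]
  congr 2
  · rw [sub_div]
  · push_cast
    field_simp

lemma integral_floor (L : ℝ) (hL : 0 < L) (f : ℤ → ℂ) (T : Finset ℤ)
    (hT : ∀ k, k ∉ T → f k = 0) :
    Integrable (fun x : ℝ => f ⌊L * x⌋) ∧
      (∫ x : ℝ, f ⌊L * x⌋) = (L : ℂ)⁻¹ * ∑' k : ℤ, f k := by
  have key : ∀ (x : ℝ) (k : ℤ), x ∈ Set.Ico ((k : ℝ) / L) (((k : ℝ) + 1) / L) ↔ ⌊L * x⌋ = k := by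
    intro x k
    rw [Set.mem_Ico, div_le_iff₀ hL, lt_div_iff₀ hL, mul_comm L x, Int.floor_eq_iff]
  have hrep : ∀ x : ℝ, f ⌊L * x⌋
      = ∑ k ∈ T, (Set.Ico ((k : ℝ) / L) (((k : ℝ) + 1) / L)).indicator (fun _ => f k) x := by
    intro x
    by_cases hmem : ⌊L * x⌋ ∈ T
    · rw [Finset.sum_eq_single_of_mem _ hmem]
      · rw [Set.indicator_of_mem ((key x _).2 rfl)]
      · intro b _ hne
        exact Set.indicator_of_notMem (fun hx => hne ((key x b).1 hx).symm) _
    · rw [hT _ hmem]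
      refine (Finset.sum_eq_zero ?_).symm
      intro b hb
      by_cases hx : x ∈ Set.Ico ((b : ℝ) / L) (((b : ℝ) + 1) / L)
      · have hfb : (⌊L * x⌋ : ℤ) ∈ T := by rw [(key x b).1 hx]; exact hb
        exact absurd hfb hmem
      · exact Set.indicator_of_notMem hx _
  have Iind : ∀ k : ℤ, Integrable
      ((Set.Ico ((k : ℝ) / L) (((k : ℝ) + 1) / L)).indicator (fun _ => f k)) := by
    intro k
    have h1 : IntegrableOn (fun _ : ℝ => f k) (Set.Ico ((k : ℝ) / L) (((k : ℝ) + 1) / L)) :=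
      integrableOn_const measure_Ico_lt_top.ne
    exact h1.integrable_indicator measurableSet_Ico
  constructor
  · rw [show (fun x : ℝ => f ⌊L * x⌋) = fun x => ∑ k ∈ T,
      (Set.Ico ((k : ℝ) / L) (((k : ℝ) + 1) / L)).indicator (fun _ => f k) x from funext hrep]
    exact integrable_finset_sum _ fun k _ => Iind k
  · rw [show (fun x : ℝ => f ⌊L * x⌋) = fun x => ∑ k ∈ T,
      (Set.Ico ((k : ℝ) / L) (((k : ℝ) + 1) / L)).indicator (fun _ => f k) x from funext hrep]
    rw [integral_finset_sum _ fun k _ => Iind k]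
    rw [tsum_eq_sum hT, Finset.mul_sum]
    refine Finset.sum_congr rfl fun k _ => ?_
    rw [integral_indicator_const _ measurableSet_Ico, measureReal_def, Real.volume_Ico]
    rw [show ((k : ℝ) + 1) / L - (k : ℝ) / L = 1 / L by field_simp; ring]
    rw [ENNReal.toReal_ofReal (by positivity)]
    rw [Complex.real_smul]
    push_cast
    rw [one_div]

lemma Phi_tendsto (S : ℝ → ℝ) (hS : Continuous S) (p : ℝ) (ω : ℂ) (hω : 0 < ω.re)
    {u v : ℕ → ℝ} {X x : ℝ} (hu : Filter.Tendsto u Filter.atTop (nhds X))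
    (hv : Filter.Tendsto v Filter.atTop (nhds x)) :
    Filter.Tendsto (fun m => Phi S p ω (u m) (v m)) Filter.atTop (nhds (Phi S p ω X x)) :=
  (((Phi_cont S hS p ω hω).tendsto (X, x)).comp (hu.prodMk_nhds hv) :)

set_option maxHeartbeats 1000000 in
/-- For `C¹` compactly supported `S`, `Re ω > 0`, `L_m → ∞` and integers
`ξ_m` with `ξ_m/L_m → X`, the periodized kernels
`h̃_{L_m}(ξ_m, ω) = (iq/L_m)Σ_{k∈ℤ}(S((k−ξ_m)/L_m) − S(k/L_m))/(ω + ip2π²ξ_m(2k−ξ_m)/L_m²)`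
converge to the infinite-line kernel
`iq∫(S(k − X/2) − S(k + X/2))/(ω + 4π²ipkX)dk`. -/
theorem periodized_kernel_converges (p q : ℝ) (S : ℝ → ℝ)
    (hS : ContDiff ℝ 1 S) (hsupp : HasCompactSupport S)
    (X : ℝ) (ω : ℂ) (hω : 0 < ω.re)
    (Lseq : ℕ → ℝ) (hLpos : ∀ m, 0 < Lseq m)
    (hLtend : Filter.Tendsto Lseq Filter.atTop Filter.atTop)
    (ξ : ℕ → ℤ)
    (hξ : Filter.Tendsto (fun m => ((ξ m : ℝ)) / Lseq m) Filter.atTop (nhds X)) :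
    Filter.Tendsto (fun m =>
        Complex.I * q / (Lseq m : ℂ) * ∑' k : ℤ,
          ((S (((k : ℝ) - (ξ m : ℝ)) / Lseq m) - S ((k : ℝ) / Lseq m) : ℝ) : ℂ) /
            (ω + Complex.I * p * (2 * Real.pi ^ 2) * ((ξ m : ℤ) : ℂ)
              * (2 * (k : ℂ) - ((ξ m : ℤ) : ℂ)) / (Lseq m : ℂ) ^ 2))
      Filter.atTop
      (nhds (Complex.I * q * ∫ k : ℝ,
        ((S (k - X / 2) - S (k + X / 2) : ℝ) : ℂ) /
          (ω + 4 * (Real.pi : ℂ) ^ 2 * Complex.I * p * k * X))) := by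
  -- uniform bound for S
  obtain ⟨M, hM⟩ := hsupp.exists_bound_of_continuous hS.continuous
  have hM' : ∀ y, |S y| ≤ M := hM
  -- support radius
  obtain ⟨R, hR0, hRB⟩ := hsupp.isBounded.subset_closedBall_lt 0 0
  have hSR : ∀ y : ℝ, R < |y| → S y = 0 := by
    intro y hy
    by_contra h
    have hmem : y ∈ tsupport S := subset_tsupport S (Function.mem_support.2 h)
    have h2 := hRB hmem
    rw [Metric.mem_closedBall, Real.dist_eq, sub_zero] at h2
    linarith
  -- support finsets
  have hTzero : ∀ m, ∀ k : ℤ, k ∉ (Finset.Icc (-(⌈R * Lseq m⌉)) ⌈R * Lseq m⌉ ∪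
      Finset.Icc (ξ m - ⌈R * Lseq m⌉) (ξ m + ⌈R * Lseq m⌉)) →
      Phi S p ω ((ξ m : ℝ) / Lseq m) ((k : ℝ) / Lseq m) = 0 := by
    intro m k hk
    have hL := hLpos m
    simp only [Finset.mem_union, Finset.mem_Icc, not_or, not_and, not_le] at hk
    have hk1 : ⌈R * Lseq m⌉ < k ∨ k < -⌈R * Lseq m⌉ := by omega
    have hk2 : ⌈R * Lseq m⌉ < k - ξ m ∨ k - ξ m < -⌈R * Lseq m⌉ := by omega
    have hNR : R * Lseq m ≤ (⌈R * Lseq m⌉ : ℝ) := Int.le_ceil _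
    have habs1 : R * Lseq m < |(k : ℝ)| := by
      rcases hk1 with h | h
      · have h' : (⌈R * Lseq m⌉ : ℝ) < (k : ℝ) := by exact_mod_cast h
        calc R * Lseq m ≤ (⌈R * Lseq m⌉ : ℝ) := hNR
          _ < (k : ℝ) := h'
          _ ≤ |(k : ℝ)| := le_abs_self _
      · have h' : (k : ℝ) < -(⌈R * Lseq m⌉ : ℝ) := by exact_mod_cast h
        calc R * Lseq m ≤ (⌈R * Lseq m⌉ : ℝ) := hNR
          _ < -(k : ℝ) := by linarith
          _ ≤ |(k : ℝ)| := neg_le_abs _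
    have habs2 : R * Lseq m < |((k - ξ m : ℤ) : ℝ)| := by
      rcases hk2 with h | h
      · have h' : (⌈R * Lseq m⌉ : ℝ) < ((k - ξ m : ℤ) : ℝ) := by exact_mod_cast h
        calc R * Lseq m ≤ (⌈R * Lseq m⌉ : ℝ) := hNR
          _ < ((k - ξ m : ℤ) : ℝ) := h'
          _ ≤ |((k - ξ m : ℤ) : ℝ)| := le_abs_self _
      · have h' : ((k - ξ m : ℤ) : ℝ) < -(⌈R * Lseq m⌉ : ℝ) := by exact_mod_cast h
        calc R * Lseq m ≤ (⌈R * Lseq m⌉ : ℝ) := hNR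
          _ < -((k - ξ m : ℤ) : ℝ) := by linarith
          _ ≤ |((k - ξ m : ℤ) : ℝ)| := neg_le_abs _
    apply Phi_zero
    · have harg : (k : ℝ) / Lseq m - (ξ m : ℝ) / Lseq m = ((k - ξ m : ℤ) : ℝ) / Lseq m := by
        push_cast; ring
      rw [harg]
      apply hSR
      rw [abs_div, abs_of_pos hL, lt_div_iff₀ hL]
      linarith
    · apply hSR
      rw [abs_div, abs_of_pos hL, lt_div_iff₀ hL]
      linarith
  -- floor facts
  have hfl : ∀ (L : ℝ), 0 < L → ∀ x : ℝ, x - 1 / L < (⌊L * x⌋ : ℝ) / L ∧ (⌊L * x⌋ : ℝ) / L ≤ x := by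
    intro L hL x
    have hfle := Int.floor_le (L * x)
    have hflt := Int.sub_one_lt_floor (L * x)
    constructor
    · rw [lt_div_iff₀ hL]
      have he : (x - 1 / L) * L = L * x - 1 := by field_simp
      linarith
    · rw [div_le_iff₀ hL]
      linarith [mul_comm x L, (by ring : x * L = L * x)]
  -- integrability of the step functions
  have hFint : ∀ m, Integrable (fun x : ℝ =>
      Phi S p ω ((ξ m : ℝ) / Lseq m) ((⌊Lseq m * x⌋ : ℝ) / Lseq m)) := fun m =>
    (integral_floor (Lseq m) (hLpos m)
      (fun k : ℤ => Phi S p ω ((ξ m : ℝ) / Lseq m) ((k : ℝ) / Lseq m)) _ (hTzero m)).1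
  have hFeq : ∀ m, (∫ x : ℝ, Phi S p ω ((ξ m : ℝ) / Lseq m) ((⌊Lseq m * x⌋ : ℝ) / Lseq m))
      = (Lseq m : ℂ)⁻¹ * ∑' k : ℤ, Phi S p ω ((ξ m : ℝ) / Lseq m) ((k : ℝ) / Lseq m) := fun m =>
    (integral_floor (Lseq m) (hLpos m)
      (fun k : ℤ => Phi S p ω ((ξ m : ℝ) / Lseq m) ((k : ℝ) / Lseq m)) _ (hTzero m)).2
  -- per-m identity
  have hid : ∀ m, Complex.I * q * (∫ x : ℝ,
        Phi S p ω ((ξ m : ℝ) / Lseq m) ((⌊Lseq m * x⌋ : ℝ) / Lseq m))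
      = Complex.I * q / (Lseq m : ℂ) * ∑' k : ℤ,
          ((S (((k : ℝ) - (ξ m : ℝ)) / Lseq m) - S ((k : ℝ) / Lseq m) : ℝ) : ℂ) /
            (ω + Complex.I * p * (2 * Real.pi ^ 2) * ((ξ m : ℤ) : ℂ)
              * (2 * (k : ℂ) - ((ξ m : ℤ) : ℂ)) / (Lseq m : ℂ) ^ 2) := by
    intro m
    rw [tsum_congr (fun k : ℤ => f_eq_Phi S p ω (Lseq m) (ne_of_gt (hLpos m)) (ξ m) k)]
    rw [hFeq m]
    ring
  -- pointwise limit
  have h_lim : ∀ x : ℝ, Tendsto (fun m =>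
      Phi S p ω ((ξ m : ℝ) / Lseq m) ((⌊Lseq m * x⌋ : ℝ) / Lseq m)) atTop
      (nhds (Phi S p ω X x)) := by
    intro x
    have hv : Tendsto (fun m => (⌊Lseq m * x⌋ : ℝ) / Lseq m) atTop (nhds x) := by
      have h0 : Tendsto (fun m => 1 / Lseq m) atTop (nhds 0) := by
        exact hLtend.inv_tendsto_atTop.congr (fun m => (one_div (Lseq m)).symm)
      have hlow : Tendsto (fun m => x - 1 / Lseq m) atTop (nhds x) := by
        simpa using tendsto_const_nhds.sub h0
      refine tendsto_of_tendsto_of_tendsto_of_le_of_le hlow tendsto_const_nhds ?_ ?_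
      · intro m; exact le_of_lt (hfl _ (hLpos m) x).1
      · intro m; exact (hfl _ (hLpos m) x).2
    exact Phi_tendsto S hS.continuous p ω hω hξ hv
  -- dominated convergence
  have hbound_int : Integrable (Set.indicator (Set.Icc (-(R + |X| + 2)) (R + |X| + 2))
      fun _ : ℝ => 2 * M / ω.re) :=
    (integrableOn_const measure_Icc_lt_top.ne).integrable_indicator measurableSet_Icc
  have hev : ∀ᶠ m in atTop, ∀ᵐ x : ℝ, ‖Phi S p ω ((ξ m : ℝ) / Lseq m)
      ((⌊Lseq m * x⌋ : ℝ) / Lseq m)‖ ≤ Set.indicator (Set.Icc (-(R + |X| + 2)) (R + |X| + 2))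
      (fun _ : ℝ => 2 * M / ω.re) x := by
    have hev1 : ∀ᶠ m in atTop, (1 : ℝ) ≤ Lseq m := hLtend.eventually_ge_atTop 1
    have hev2 : ∀ᶠ m in atTop, |(ξ m : ℝ) / Lseq m - X| ≤ 1 := by
      filter_upwards [hξ (Metric.closedBall_mem_nhds X one_pos)] with m hm
      simpa [Real.dist_eq] using hm
    filter_upwards [hev1, hev2] with m h1 h2
    refine ae_of_all _ fun x => ?_
    by_cases hx : x ∈ Set.Icc (-(R + |X| + 2)) (R + |X| + 2)
    · rw [Set.indicator_of_mem hx]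
      exact Phi_bound S p ω hω M hM' _ _
    · rw [Set.indicator_of_notMem hx]
      have hL := hLpos m
      have hfx := hfl (Lseq m) hL x
      have hxB : R + |X| + 2 < |x| := by
        rw [Set.mem_Icc, not_and_or, not_le, not_le] at hx
        rcases hx with h | h
        · exact lt_abs.2 (Or.inr (by linarith))
        · exact lt_abs.2 (Or.inl h)
      have h1L : 1 / Lseq m ≤ 1 := by
        rw [div_le_one hL]; exact h1
      have hvx : |(⌊Lseq m * x⌋ : ℝ) / Lseq m - x| ≤ 1 :=
        abs_le.2 ⟨by linarith [hfx.1], by linarith [hfx.2]⟩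
      have hvabs : R + |X| + 1 < |(⌊Lseq m * x⌋ : ℝ) / Lseq m| := by
        have ht := abs_sub_abs_le_abs_sub x ((⌊Lseq m * x⌋ : ℝ) / Lseq m)
        rw [abs_sub_comm] at hvx
        linarith
      have huabs : |(ξ m : ℝ) / Lseq m| ≤ |X| + 1 := by
        have ht := abs_sub_abs_le_abs_sub ((ξ m : ℝ) / Lseq m) X
        linarith
      rw [Phi_zero S p ω _ _ ?_ ?_]
      · simp
      · apply hSR
        have ht := abs_sub_abs_le_abs_sub ((⌊Lseq m * x⌋ : ℝ) / Lseq m) ((ξ m : ℝ) / Lseq m)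
        linarith
      · apply hSR
        linarith [abs_nonneg X]
  have hconv : Tendsto (fun m => ∫ x : ℝ,
      Phi S p ω ((ξ m : ℝ) / Lseq m) ((⌊Lseq m * x⌋ : ℝ) / Lseq m)) atTop
      (nhds (∫ x : ℝ, Phi S p ω X x)) :=
    tendsto_integral_filter_of_dominated_convergence _
      (Eventually.of_forall fun m => (hFint m).aestronglyMeasurable)
      hev hbound_int (ae_of_all _ h_lim)
  -- identify the limit
  have hInt : (∫ x : ℝ, Phi S p ω X x) = ∫ k : ℝ,
      ((S (k - X / 2) - S (k + X / 2) : ℝ) : ℂ) /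
        (ω + 4 * (Real.pi : ℂ) ^ 2 * Complex.I * p * k * X) := by
    rw [← integral_sub_right_eq_self (fun k : ℝ => ((S (k - X / 2) - S (k + X / 2) : ℝ) : ℂ) /
      (ω + 4 * (Real.pi : ℂ) ^ 2 * Complex.I * p * k * X)) (X / 2)]
    congr 1
    funext x
    rw [Phi]
    rw [show x - X / 2 - X / 2 = x - X by ring, show x - X / 2 + X / 2 = x by ring]
    congr 1
    push_cast
    ring
  have hfinal := hconv.const_mul (Complex.I * (q : ℂ))
  rw [hInt] at hfinal
  exact Filter.Tendsto.congr hid hfinal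
end

section
/- Let p, q be real constants, L > 0, ξ ∈ ℤ, and let (P_n)_{n∈ℤ} be an absolutely summable family of complex numbers. Then the function ω ↦ h̃_L(ξ, ω) = iq Σ_{k∈ℤ} (P_{k−ξ} − P_k) / (ω + i p 2π² ξ(2k−ξ)/L²) is well defined (the series converges absolutely) and analytic (complex differentiable) on the open right half-plane {ω ∈ ℂ : Re(ω) > 0}. -/
/-- For absolutely summable `(P_n)`, the Laplace-transformed kernel
`ω ↦ h̃_L(ξ,ω) = iq Σ_{k∈ℤ}(P_{k−ξ} − P_k)/(ω + ip2π²ξ(2k−ξ)/L²)` is well defined (the series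
converges absolutely) and complex differentiable on the open right half-plane `{Re ω > 0}`. -/
theorem kernel_analytic_on_right_half_plane (p q L : ℝ) (hL : 0 < L) (ξ : ℤ)
    (P : ℤ → ℂ) (hP : Summable fun n => ‖P n‖) :
    (∀ ω : ℂ, 0 < ω.re → Summable fun k : ℤ =>
      ‖(P (k - ξ) - P k) /
        (ω + Complex.I * p * (2 * Real.pi ^ 2) * (ξ : ℂ) * (2 * (k : ℂ) - ξ) / (L : ℂ) ^ 2)‖) ∧
    DifferentiableOn ℂ (fun ω : ℂ =>
        Complex.I * q * ∑' k : ℤ, (P (k - ξ) - P k) /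
          (ω + Complex.I * p * (2 * Real.pi ^ 2) * (ξ : ℂ) * (2 * (k : ℂ) - ξ) / (L : ℂ) ^ 2))
      {ω : ℂ | 0 < ω.re} := by
  set c : ℤ → ℝ := fun k => p * (2 * Real.pi ^ 2) * (ξ : ℝ) * (2 * (k : ℝ) - ξ) / L ^ 2 with hc
  have key : ∀ (k : ℤ) (ω : ℂ),
      ω + Complex.I * p * (2 * Real.pi ^ 2) * (ξ : ℂ) * (2 * (k : ℂ) - ξ) / (L : ℂ) ^ 2
        = ω + Complex.I * (c k : ℂ) := by
    intro k ω
    simp only [hc]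
    push_cast
    ring
  have hre : ∀ (k : ℤ) (ω : ℂ), (ω + Complex.I * (c k : ℂ)).re = ω.re := by
    intro k ω; simp
  have hne : ∀ (k : ℤ) (ω : ℂ), 0 < ω.re → ω + Complex.I * (c k : ℂ) ≠ 0 := by
    intro k ω hω h
    rw [← hre k ω] at hω
    rw [h] at hω; simp at hω
  have hnorm : ∀ (k : ℤ) (ω : ℂ), 0 < ω.re →
      ‖(P (k - ξ) - P k) /
        (ω + Complex.I * p * (2 * Real.pi ^ 2) * (ξ : ℂ) * (2 * (k : ℂ) - ξ) / (L : ℂ) ^ 2)‖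
        ≤ (‖P (k - ξ)‖ + ‖P k‖) / ω.re := by
    intro k ω hω
    rw [key, norm_div]
    have h1 : ‖P (k - ξ) - P k‖ ≤ ‖P (k - ξ)‖ + ‖P k‖ := norm_sub_le _ _
    have h2 : ω.re ≤ ‖ω + Complex.I * (c k : ℂ)‖ := by
      calc ω.re ≤ |(ω + Complex.I * (c k : ℂ)).re| := by rw [hre]; exact le_abs_self _
        _ ≤ ‖ω + Complex.I * (c k : ℂ)‖ := Complex.abs_re_le_norm _
    exact div_le_div₀ (by positivity) h1 hω h2
  have hinj : Function.Injective (fun k : ℤ => k - ξ) := sub_left_injective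
  have hPs : Summable (fun k : ℤ => ‖P (k - ξ)‖ + ‖P k‖) :=
    (hP.comp_injective hinj).add hP
  constructor
  · intro ω hω
    refine Summable.of_nonneg_of_le (fun k => norm_nonneg _) (fun k => hnorm k ω hω)
      (hPs.div_const ω.re)
  · have hmain : DifferentiableOn ℂ (fun ω : ℂ =>
        ∑' k : ℤ, (P (k - ξ) - P k) /
          (ω + Complex.I * p * (2 * Real.pi ^ 2) * (ξ : ℂ) * (2 * (k : ℂ) - ξ) / (L : ℂ) ^ 2))
        {ω : ℂ | 0 < ω.re} := by
      intro ω₀ hω₀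
      simp only [Set.mem_setOf_eq] at hω₀
      set U : Set ℂ := {ω : ℂ | ω₀.re / 2 < ω.re} with hU
      have hUopen : IsOpen U := isOpen_lt continuous_const Complex.continuous_re
      have hUsub : U ⊆ {ω : ℂ | 0 < ω.re} := by
        intro ω hω
        simp only [hU, Set.mem_setOf_eq] at hω ⊢
        linarith
      have hdiff : DifferentiableOn ℂ (fun ω : ℂ =>
          ∑' k : ℤ, (P (k - ξ) - P k) /
            (ω + Complex.I * p * (2 * Real.pi ^ 2) * (ξ : ℂ) * (2 * (k : ℂ) - ξ) / (L : ℂ) ^ 2))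
          U := by
        apply Complex.differentiableOn_tsum_of_summable_norm (hPs.div_const (ω₀.re / 2))
          (fun k => ?_) hUopen (fun k ω hω => ?_)
        · have : (fun ω : ℂ => (P (k - ξ) - P k) /
              (ω + Complex.I * p * (2 * Real.pi ^ 2) * (ξ : ℂ) * (2 * (k : ℂ) - ξ) / (L : ℂ) ^ 2))
              = fun ω : ℂ => (P (k - ξ) - P k) / (ω + Complex.I * (c k : ℂ)) := by
            funext ω; rw [key]
          rw [this]
          exact (differentiableOn_const _).div
            ((differentiableOn_id).add_const _)
            (fun ω hω => hne k ω (hUsub hω))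
        · have h0 : 0 < ω.re := hUsub hω
          refine (hnorm k ω h0).trans ?_
          apply div_le_div_of_nonneg_left (by positivity) (by linarith) (le_of_lt hω)
      exact ((hdiff.differentiableAt (hUopen.mem_nhds (by simp only [hU, Set.mem_setOf_eq]; linarith))).differentiableWithinAt)
    exact (differentiableOn_const _).mul hmain
end
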